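/- Let K be a convex body in R^d, let x ∈ K, and let x' ∈ M'(x) = M^{1/5}(x). Then x ∈ M^{1/4}(x'). -/
import Mathlib

open Set Metric
open scoped Pointwise

/-- The Macbeath region `M^λ(x) = x + λ((K − x) ∩ (x − K))`. -/
def macbeath {d : ℕ} (K : Set (EuclideanSpace ℝ (Fin d)))
    (x : EuclideanSpace ℝ (Fin d)) (lam : ℝ) : Set (EuclideanSpace ℝ (Fin d)) :=
  (fun v => x + lam • v) '' ((K - {x}) ∩ ({x} - K))

/-- Lemma `mac3`: if `x ∈ K` and `x' ∈ M'(x) = M^{1/5}(x)`, then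
`x ∈ M^{1/4}(x')`. -/
theorem mem_macbeath_quarter (d : ℕ)
    (K : Set (EuclideanSpace ℝ (Fin d)))
    (hK_compact : IsCompact K) (hK_conv : Convex ℝ K)
    (hK_int : (interior K).Nonempty)
    (x x' : EuclideanSpace ℝ (Fin d)) (hx : x ∈ K)
    (hx' : x' ∈ macbeath K x (1 / 5)) :
    x ∈ macbeath K x' (1 / 4) := by
  obtain ⟨v, ⟨hv1, hv2⟩, hx'eq⟩ := hx'
  obtain ⟨k1, hk1, x1, hx1, h1⟩ := hv1
  obtain ⟨x2, hx2, k2, hk2, h2⟩ := hv2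
  rw [mem_singleton_iff] at hx1 hx2
  subst hx1; subst hx2
  have hk : (2/5 : ℝ) • x2 + (3/5 : ℝ) • k2 ∈ K :=
    hK_conv hx hk2 (by norm_num) (by norm_num) (by norm_num)
  refine ⟨(-4/5 : ℝ) • v, ⟨⟨(2/5 : ℝ) • x2 + (3/5 : ℝ) • k2, hk, x', rfl, ?_⟩,
    ⟨x', rfl, k1, hk1, ?_⟩⟩, ?_⟩
  · rw [← hx'eq, ← h2]; simp only; module
  · rw [← hx'eq, ← h1]; simp only; module
  · rw [← hx'eq]; simp only; module
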